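/- Let G be a graph whose nodes are equipped with distinct weights. For any set of nodes Z, the set IB(Z) of all nodes z such that there exists a weight-increasing path z_1, ..., z_k with z_1 ∈ Z and z_k = z is an influence blocking subgraph containing Z, and it is contained in every influence blocking subgraph containing Z (i.e., it is the unique minimal one). -/

import Mathlib

variable {V : Type*}

/-- There is a weight-increasing path in `G` from (some node of) `Z` to `z`. -/
def IsIncPathFrom (G : SimpleGraph V) (w : V → ℝ) (Z : Set V) (z : V) : Prop :=
  ∃ n : ℕ, ∃ p : Fin (n + 1) → V,
    p 0 ∈ Z ∧ p (Fin.last n) = z ∧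
    (∀ i : Fin n, G.Adj (p i.castSucc) (p i.succ)) ∧ StrictMono (w ∘ p)

/-- `IB(Z)`: the set of nodes reachable from `Z` by a weight-increasing path. -/
def IB (G : SimpleGraph V) (w : V → ℝ) (Z : Set V) : Set V :=
  {z | IsIncPathFrom G w Z z}

/-- `H` is an influence blocking subgraph: every node of `H` has weight strictly larger
than all of its neighbors outside `H`. -/
def IsIBS (G : SimpleGraph V) (w : V → ℝ) (H : Set V) : Prop :=
  ∀ z ∈ H, ∀ y, G.Adj z y → y ∉ H → w y < w z

lemma IB_extend (G : SimpleGraph V) (w : V → ℝ) (Z : Set V) {z y : V}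
    (hz : z ∈ IB G w Z) (hadj : G.Adj z y) (hlt : w z < w y) : y ∈ IB G w Z := by
  obtain ⟨n, p, h0, hlast, hadjp, hmono⟩ := hz
  refine ⟨n + 1, Fin.snoc p y, ?_, ?_, ?_, ?_⟩
  · rw [show (0 : Fin (n+1+1)) = Fin.castSucc 0 from rfl, Fin.snoc_castSucc]
    exact h0
  · simp
  · intro i
    induction i using Fin.lastCases with
    | last =>
      rw [Fin.succ_last]
      simp only [Fin.snoc_castSucc, Fin.snoc_last]
      rwa [hlast]
    | cast j =>
      rw [Fin.succ_castSucc]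
      simp only [Fin.snoc_castSucc]
      exact hadjp j
  · rw [Fin.strictMono_iff_lt_succ]
    intro i
    induction i using Fin.lastCases with
    | last =>
      rw [Fin.succ_last]
      simp only [Function.comp_apply, Fin.snoc_castSucc, Fin.snoc_last]
      rwa [hlast]
    | cast j =>
      rw [Fin.succ_castSucc]
      simp only [Function.comp_apply, Fin.snoc_castSucc]
      exact hmono (Fin.castSucc_lt_succ : j.castSucc < j.succ)

/-- `IB(Z)` is an influence blocking subgraph containing `Z`, and it is contained in
every influence blocking subgraph containing `Z` (it is the unique minimal one). -/
theorem IB_minimal_ibs (G : SimpleGraph V) (w : V → ℝ) (hw : Function.Injective w)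
    (Z : Set V) :
    Z ⊆ IB G w Z ∧ IsIBS G w (IB G w Z) ∧
      ∀ H : Set V, IsIBS G w H → Z ⊆ H → IB G w Z ⊆ H := by
  refine ⟨?_, ?_, ?_⟩
  · intro z hz
    exact ⟨0, fun _ => z, hz, rfl, fun i => i.elim0, fun a b h => by simp [Fin.lt_def, Nat.lt_one_iff.mp a.isLt, Nat.lt_one_iff.mp b.isLt] at h⟩
  · intro z hz y hadj hy
    rcases lt_trichotomy (w y) (w z) with h | h | h
    · exact h
    · exact absurd (hw h) hadj.ne'
    · exact absurd (IB_extend G w Z hz hadj h) hy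
  · intro H hH hZH z hz
    obtain ⟨n, p, h0, hlast, hadjp, hmono⟩ := hz
    have key : ∀ i : Fin (n + 1), p i ∈ H := by
      intro i
      induction i using Fin.induction with
      | zero => exact hZH h0
      | succ j ih =>
        by_contra hc
        exact absurd (hmono (Fin.castSucc_lt_succ : j.castSucc < j.succ)) (not_lt.mpr (hH _ ih _ (hadjp j) hc).le)
    rw [← hlast]; exact key _
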